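/- Fix natural numbers k and r. Define the extended decoding-success probability P_s(k,n,r) to be 0 if r < k, the product ∏_{l=0}^{n−r−1} (1 − 2^{l−(n−k)}) if k ≤ r ≤ n, and 1 if r > n. Then for any n₁ ≤ n₂ (with k ≤ n₁, k ≤ n₂), P_s(k, n₂, r) ≤ P_s(k, n₁, r); that is, P_s(k, n, r) is monotone decreasing in n. -/

import Mathlib

/-- The extended decoding-success probability of a random binary linear `(n,k)` code
given `r` received symbols: `0` if `r < k`, `∏_{l=0}^{n−r−1} (1 − 2^{l−(n−k)})` if
`k ≤ r ≤ n`, and `1` if `r > n`. -/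
noncomputable def Ps (k n r : ℕ) : ℝ :=
  if r < k then 0
  else if r ≤ n then
    ∏ l ∈ Finset.range (n - r), (1 - (2 : ℝ) ^ ((l : ℤ) - ((n : ℤ) - (k : ℤ))))
  else 1

lemma factor_nonneg (e : ℤ) (he : e ≤ 0) : 0 ≤ 1 - (2 : ℝ) ^ e := by
  have : (2 : ℝ) ^ e ≤ (2 : ℝ) ^ (0 : ℤ) := zpow_le_zpow_right₀ (by norm_num) he
  simp only [zpow_zero] at this
  linarith

lemma factor_le_one (e : ℤ) : 1 - (2 : ℝ) ^ e ≤ 1 := by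
  have : (0 : ℝ) < (2 : ℝ) ^ e := by positivity
  linarith

lemma Ps_nonneg (k n r : ℕ) : 0 ≤ Ps k n r := by
  unfold Ps
  split
  · exact le_refl 0
  · rename_i hkr
    push_neg at hkr
    split
    · rename_i hrn
      apply Finset.prod_nonneg
      intro l hl
      rw [Finset.mem_range] at hl
      apply factor_nonneg
      have : l < n - k := lt_of_lt_of_le hl (Nat.sub_le_sub_left hkr n)
      omega
    · norm_num

lemma Ps_le_one (k n r : ℕ) : Ps k n r ≤ 1 := by
  unfold Ps
  split
  · norm_num
  · rename_i hkr
    push_neg at hkr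
    split
    · rename_i hrn
      apply Finset.prod_le_one
      · intro l hl
        rw [Finset.mem_range] at hl
        apply factor_nonneg
        have : l < n - k := lt_of_lt_of_le hl (Nat.sub_le_sub_left hkr n)
        omega
      · intro l _
        exact factor_le_one _
    · exact le_refl 1

lemma Ps_step (k n r : ℕ) (hk : k ≤ n) : Ps k (n + 1) r ≤ Ps k n r := by
  by_cases hkr : r < k
  · unfold Ps; simp [hkr]
  push_neg at hkr
  by_cases hrn : r ≤ n
  · -- both are products
    have h1 : r ≤ n + 1 := by omega
    unfold Ps
    rw [if_neg (by omega), if_pos h1, if_neg (by omega), if_pos hrn]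
    have hsub : n + 1 - r = (n - r) + 1 := by omega
    rw [hsub, Finset.prod_range_succ']
    have heq : ∀ i ∈ Finset.range (n - r),
        (1 - (2 : ℝ) ^ (((i + 1 : ℕ) : ℤ) - (((n + 1 : ℕ) : ℤ) - (k : ℤ))))
        = (1 - (2 : ℝ) ^ ((i : ℤ) - ((n : ℤ) - (k : ℤ)))) := by
      intro i _
      congr 1
      push_cast
      ring_nf
    rw [Finset.prod_congr rfl heq]
    have hf0 : (1 - (2 : ℝ) ^ (((0 : ℕ) : ℤ) - (((n + 1 : ℕ) : ℤ) - (k : ℤ)))) ≤ 1 :=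
      factor_le_one _
    have hf0' : 0 ≤ (1 - (2 : ℝ) ^ (((0 : ℕ) : ℤ) - (((n + 1 : ℕ) : ℤ) - (k : ℤ)))) := by
      apply factor_nonneg; push_cast; omega
    have hp : 0 ≤ ∏ i ∈ Finset.range (n - r), (1 - (2 : ℝ) ^ ((i : ℤ) - ((n : ℤ) - (k : ℤ)))) := by
      apply Finset.prod_nonneg
      intro l hl
      rw [Finset.mem_range] at hl
      apply factor_nonneg
      have : l < n - k := lt_of_lt_of_le hl (Nat.sub_le_sub_left hkr n)
      omega
    nlinarith
  · -- r > n : Ps k n r = 1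
    have : Ps k n r = 1 := by unfold Ps; rw [if_neg (by omega), if_neg (by omega)]
    rw [this]
    exact Ps_le_one _ _ _

/-- `P_s(k, n, r)` is monotone decreasing in `n`. -/
theorem Ps_antitone_in_n (k r n₁ n₂ : ℕ) (hk₁ : k ≤ n₁) (hk₂ : k ≤ n₂) (h : n₁ ≤ n₂) :
    Ps k n₂ r ≤ Ps k n₁ r := by
  induction n₂, h using Nat.le_induction with
  | base => exact le_refl _
  | succ m hm ih =>
    exact le_trans (Ps_step k m r (le_trans hk₁ hm)) (ih (le_trans hk₁ hm))
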